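/- arXiv:2508.14777 — 2 statements merged into one kernel-verified Lean document; each statement's English description precedes it below -/
import Mathlib

section
/- Let ℓ(s) = 1 + |log s|, ℓℓ(s) = 1 + log ℓ(s), ℓℓℓ(s) = 1 + log ℓℓ(s). For q ∈ [1,∞), one has ‖s^{-1/q'} ℓ(s)^{-1/q'} ℓℓ(s)^{-1/q'} ℓℓℓ(s)^{-1}‖_{L^{q'}(0,r)} ≈ ℓℓℓ(r)^{-1/q} near 0, with constants independent of r. -/
open MeasureTheory Set
open scoped ENNReal

noncomputable def ell (s : ℝ) : ℝ := 1 + |Real.log s|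
noncomputable def ellell (s : ℝ) : ℝ := 1 + Real.log (ell s)
noncomputable def ellellell (s : ℝ) : ℝ := 1 + Real.log (ellell s)


lemma one_le_ell (s : ℝ) : 1 ≤ ell s := by simp [ell, abs_nonneg]
lemma one_le_ellell (s : ℝ) : 1 ≤ ellell s := by
  have := Real.log_nonneg (one_le_ell s); simp [ellell]; linarith
lemma one_le_ellellell (s : ℝ) : 1 ≤ ellellell s := by
  have := Real.log_nonneg (one_le_ellell s); simp [ellellell]; linarith
lemma ell_pos (s : ℝ) : 0 < ell s := lt_of_lt_of_le one_pos (one_le_ell s)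
lemma ellell_pos (s : ℝ) : 0 < ellell s := lt_of_lt_of_le one_pos (one_le_ellell s)
lemma ellellell_pos (s : ℝ) : 0 < ellellell s := lt_of_lt_of_le one_pos (one_le_ellellell s)

lemma ell_anti {s t : ℝ} (hs : 0 < s) (hst : s ≤ t) (ht : t ≤ 1) : ell t ≤ ell s := by
  have h1 : Real.log t ≤ 0 := Real.log_nonpos (by linarith) ht
  have h2 : Real.log s ≤ Real.log t := Real.log_le_log hs hst
  rw [ell, ell, abs_of_nonpos h1, abs_of_nonpos (le_trans h2 h1)]
  linarith
lemma ellell_anti {s t : ℝ} (hs : 0 < s) (hst : s ≤ t) (ht : t ≤ 1) : ellell t ≤ ellell s := by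
  have := Real.log_le_log (ell_pos t) (ell_anti hs hst ht)
  simp [ellell]; linarith
lemma ellellell_anti {s t : ℝ} (hs : 0 < s) (hst : s ≤ t) (ht : t ≤ 1) :
    ellellell t ≤ ellellell s := by
  have := Real.log_le_log (ellell_pos t) (ellell_anti hs hst ht)
  simp [ellellell]; linarith

lemma ellellell_sq {r : ℝ} (hr : 0 < r) (hr1 : r < 1) : ellellell (r^2) ≤ 2 * ellellell r := by
  have hlog2 : Real.log 2 ≤ 1 := by
    have := Real.log_le_sub_one_of_pos (by norm_num : (0:ℝ) < 2); linarith
  have h1 : ell (r^2) ≤ 2 * ell r := by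
    rw [ell, ell, show r^2 = r*r by ring, Real.log_mul hr.ne' hr.ne']
    have := abs_nonneg (Real.log r)
    calc 1 + |Real.log r + Real.log r| ≤ 1 + (|Real.log r| + |Real.log r|) := by
          gcongr; exact abs_add_le _ _
      _ ≤ 2 * (1 + |Real.log r|) := by linarith
  have h2 : ellell (r^2) ≤ 2 * ellell r := by
    have := Real.log_le_log (ell_pos _) h1
    rw [Real.log_mul (by norm_num) (ell_pos r).ne'] at this
    have h3 := Real.log_nonneg (one_le_ell r)
    simp only [ellell]; linarith
  have := Real.log_le_log (ellell_pos _) h2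
  rw [Real.log_mul (by norm_num) (ellell_pos r).ne'] at this
  have h3 := Real.log_nonneg (one_le_ellell r)
  simp only [ellellell]; linarith

lemma ellellell_tendsto : Filter.Tendsto ellellell (nhdsWithin 0 (Set.Ioi 0)) Filter.atTop := by
  have h1 : Filter.Tendsto ell (nhdsWithin 0 (Set.Ioi 0)) Filter.atTop := by
    have := Real.tendsto_log_nhdsGT_zero
    have habs : Filter.Tendsto (fun s : ℝ => |Real.log s|) (nhdsWithin 0 (Set.Ioi 0))
        Filter.atTop := Filter.tendsto_abs_atBot_atTop.comp this
    exact Filter.tendsto_atTop_add_const_left _ 1 habs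
  have h2 : Filter.Tendsto ellell (nhdsWithin 0 (Set.Ioi 0)) Filter.atTop := by
    exact Filter.tendsto_atTop_add_const_left _ 1 (Real.tendsto_log_atTop.comp h1)
  exact Filter.tendsto_atTop_add_const_left _ 1 (Real.tendsto_log_atTop.comp h2)

lemma ell_hasDeriv {s : ℝ} (hs : 0 < s) (hs1 : s < 1) : HasDerivAt ell (-s⁻¹) s := by
  have h : HasDerivAt (fun t : ℝ => 1 - Real.log t) (-s⁻¹) s := by
    simpa using ((Real.hasDerivAt_log hs.ne').const_sub 1)
  apply h.congr_of_eventuallyEq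
  filter_upwards [Ioo_mem_nhds hs hs1] with t ht
  rw [ell, abs_of_nonpos (Real.log_nonpos ht.1.le ht.2.le)]; ring

lemma ellell_hasDeriv {s : ℝ} (hs : 0 < s) (hs1 : s < 1) :
    HasDerivAt ellell (-(s * ell s)⁻¹) s := by
  have := ((ell_hasDeriv hs hs1).log (ell_pos s).ne').const_add 1
  exact this.congr_deriv (by rw [mul_inv]; ring)
lemma ellellell_hasDeriv {s : ℝ} (hs : 0 < s) (hs1 : s < 1) :
    HasDerivAt ellellell (-(s * ell s * ellell s)⁻¹) s := by
  have := ((ellell_hasDeriv hs hs1).log (ellell_pos s).ne').const_add 1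
  exact this.congr_deriv (by rw [mul_inv]; ring)

noncomputable def gg (p s : ℝ) : ℝ := s⁻¹ * (ell s)⁻¹ * (ellell s)⁻¹ * ellellell s ^ (-p)

lemma F_hasDeriv {p : ℝ} (hp : 1 < p) {s : ℝ} (hs : 0 < s) (hs1 : s < 1) :
    HasDerivAt (fun t => ellellell t ^ (1-p) / (p-1)) (gg p s) s := by
  have h := ((ellellell_hasDeriv hs hs1).rpow_const (p := 1-p)
    (Or.inl (ellellell_pos s).ne')).div_const (p-1)
  refine h.congr_deriv (Eq.symm ?_)
  rw [gg, show (1:ℝ)-p-1 = -p by ring, mul_inv, mul_inv,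
    eq_div_iff (show p-1 ≠ 0 by linarith)]
  ring

lemma gg_contOn {p : ℝ} : ContinuousOn (gg p) (Set.Ioo 0 1) := by
  have hc : ContinuousOn ellellell (Set.Ioo (0:ℝ) 1) := fun s hs =>
    ((ellellell_hasDeriv hs.1 hs.2).continuousAt).continuousWithinAt
  have hc2 : ContinuousOn ellell (Set.Ioo (0:ℝ) 1) := fun s hs =>
    ((ellell_hasDeriv hs.1 hs.2).continuousAt).continuousWithinAt
  have hc1 : ContinuousOn ell (Set.Ioo (0:ℝ) 1) := fun s hs =>
    ((ell_hasDeriv hs.1 hs.2).continuousAt).continuousWithinAt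
  apply ContinuousOn.mul
  · apply ContinuousOn.mul
    · apply ContinuousOn.mul
      · exact continuousOn_id.inv₀ (fun s hs => hs.1.ne')
      · exact hc1.inv₀ (fun s hs => (ell_pos s).ne')
    · exact hc2.inv₀ (fun s hs => (ellell_pos s).ne')
  · exact hc.rpow_const (fun s hs => Or.inl (ellellell_pos s).ne')

lemma integral_gg {p : ℝ} (hp : 1 < p) {ε r : ℝ} (hε : 0 < ε) (hεr : ε ≤ r) (hr : r < 1) :
    ∫ s in ε..r, gg p s
      = ellellell r ^ (1-p) / (p-1) - ellellell ε ^ (1-p) / (p-1) := by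
  have hsub : Set.uIcc ε r ⊆ Set.Ioo 0 1 := by
    rw [Set.uIcc_of_le hεr]
    exact fun x hx => ⟨lt_of_lt_of_le hε hx.1, lt_of_le_of_lt hx.2 hr⟩
  exact intervalIntegral.integral_eq_sub_of_hasDerivAt
    (fun x hx => F_hasDeriv hp (hsub hx).1 (hsub hx).2)
    ((gg_contOn.mono hsub).intervalIntegrable)

lemma lintegral_gg_Ioo {p : ℝ} (hp : 1 < p) {ε r : ℝ} (hε : 0 < ε) (hεr : ε ≤ r) (hr : r < 1) :
    ∫⁻ s in Set.Ioo ε r, ENNReal.ofReal (gg p s)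
      = ENNReal.ofReal (ellellell r ^ (1-p) / (p-1) - ellellell ε ^ (1-p) / (p-1)) := by
  have hsub : Set.Icc ε r ⊆ Set.Ioo 0 1 :=
    fun x hx => ⟨lt_of_lt_of_le hε hx.1, lt_of_le_of_lt hx.2 hr⟩
  have hint : IntegrableOn (gg p) (Set.Ioo ε r) volume := by
    apply IntegrableOn.mono_set _ Set.Ioo_subset_Icc_self
    exact (gg_contOn.mono hsub).integrableOn_Icc
  rw [← ofReal_integral_eq_lintegral_ofReal hint]
  · rw [← integral_gg hp hε hεr hr, intervalIntegral.integral_of_le hεr,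
      MeasureTheory.integral_Ioc_eq_integral_Ioo]
  · rw [Filter.EventuallyLE, ae_restrict_iff' measurableSet_Ioo]
    apply Filter.Eventually.of_forall
    intro x hx
    have hx0 : 0 < x := lt_of_lt_of_le hε hx.1.le
    have := Real.rpow_nonneg (ellellell_pos x).le (-p)
    have h1 := (ell_pos x); have h2 := ellell_pos x
    simp only [Pi.zero_apply, gg]
    positivity

lemma lintegral_gg {p : ℝ} (hp : 1 < p) {r : ℝ} (hr0 : 0 < r) (hr : r < 1) :
    ∫⁻ s in Set.Ioo 0 r, ENNReal.ofReal (gg p s)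
      = ENNReal.ofReal (ellellell r ^ (1-p) / (p-1)) := by
  set ε : ℕ → ℝ := fun n => r / (n+2) with hε
  have hεpos : ∀ n, 0 < ε n := fun n => div_pos hr0 (by positivity)
  have hεle : ∀ n, ε n ≤ r := fun n => by
    rw [hε]; rw [div_le_iff₀ (by positivity)]
    nlinarith [hr0.le, (Nat.cast_nonneg n : (0:ℝ) ≤ n)]
  have hεanti : Antitone ε := fun i j hij => by
    apply div_le_div_of_nonneg_left hr0.le (by positivity)
    have : (i:ℝ) ≤ j := Nat.cast_le.mpr hij
    linarith
  have hunion : Set.Ioo 0 r = ⋃ n, Set.Ioo (ε n) r := by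
    ext x
    simp only [Set.mem_iUnion, Set.mem_Ioo]
    constructor
    · rintro ⟨hx0, hxr⟩
      obtain ⟨n, hn⟩ := exists_nat_gt (r / x)
      refine ⟨n, ?_, hxr⟩
      rw [hε, div_lt_iff₀ (by positivity)]
      rw [div_lt_iff₀ hx0] at hn
      nlinarith
    · rintro ⟨n, hn1, hn2⟩
      exact ⟨lt_trans (hεpos n) hn1, hn2⟩
  have hdir : Directed (· ⊆ ·) (fun n => Set.Ioo (ε n) r) := by
    apply Monotone.directed_le
    intro i j hij
    exact Set.Ioo_subset_Ioo (hεanti hij) le_rfl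
  rw [hunion, setLIntegral_iUnion_of_directed _ hdir]
  have hval : ∀ n, ∫⁻ s in Set.Ioo (ε n) r, ENNReal.ofReal (gg p s)
      = ENNReal.ofReal (ellellell r ^ (1-p) / (p-1) - ellellell (ε n) ^ (1-p) / (p-1)) :=
    fun n => lintegral_gg_Ioo hp (hεpos n) (hεle n) hr
  simp only [hval]
  have hFnonneg : ∀ n, 0 ≤ ellellell (ε n) ^ (1-p) / (p-1) := fun n => by
    have := Real.rpow_nonneg (ellellell_pos (ε n)).le (1-p)
    have : (0:ℝ) < p - 1 := by linarith
    positivity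
  apply le_antisymm
  · apply iSup_le
    intro n
    apply ENNReal.ofReal_le_ofReal
    linarith [hFnonneg n]
  · have hε0 : Filter.Tendsto ε Filter.atTop (nhdsWithin 0 (Set.Ioi 0)) := by
      rw [tendsto_nhdsWithin_iff]
      constructor
      · apply Filter.Tendsto.div_atTop tendsto_const_nhds
        apply Filter.tendsto_atTop_add_const_right
        exact tendsto_natCast_atTop_atTop
      · exact Filter.Eventually.of_forall (fun n => hεpos n)
    have h1 : Filter.Tendsto (fun n => ellellell (ε n) ^ (1-p)) Filter.atTop (nhds 0) := by
      have h2 := (tendsto_rpow_neg_atTop (show (0:ℝ) < p - 1 by linarith)).comp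
        (ellellell_tendsto.comp hε0)
      simpa [Function.comp_def, show -(p-1) = 1-p by ring] using h2
    have h3 : Filter.Tendsto
        (fun n => ENNReal.ofReal (ellellell r ^ (1-p) / (p-1) - ellellell (ε n) ^ (1-p) / (p-1)))
        Filter.atTop (nhds (ENNReal.ofReal (ellellell r ^ (1-p) / (p-1)))) := by
      apply (ENNReal.continuous_ofReal.tendsto _).comp
      have := (tendsto_const_nhds (x := ellellell r ^ (1-p) / (p-1)) (f := Filter.atTop (α := ℕ))).sub
        ((h1.div_const (p-1)))
      simpa using this
    exact le_of_tendsto' h3 (fun n => le_iSup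
      (fun n => ENNReal.ofReal (ellellell r ^ (1-p) / (p-1) - ellellell (ε n) ^ (1-p) / (p-1))) n)

lemma fpow_eq {p : ℝ} (hp : 1 < p) {x : ℝ} (hx : 0 < x) :
    ((‖x ^ (-(1/p)) * ell x ^ (-(1/p)) * ellell x ^ (-(1/p)) * ellellell x ^ (-1:ℝ)‖₊ : ℝ≥0∞)) ^ p
      = ENNReal.ofReal (gg p x) := by
  have h0 : (0:ℝ) ≤ x := hx.le
  have hp0 : p ≠ 0 := by linarith
  have h1 := (ell_pos x).le
  have h2 := (ellell_pos x).le
  have h3 := (ellellell_pos x).le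
  have hf : (0:ℝ) ≤ x ^ (-(1/p)) * ell x ^ (-(1/p)) * ellell x ^ (-(1/p)) * ellellell x ^ (-1:ℝ) := by
    positivity
  rw [← enorm_eq_nnnorm, Real.enorm_eq_ofReal hf, ENNReal.ofReal_rpow_of_nonneg hf (by linarith)]
  congr 1
  rw [gg, Real.mul_rpow (by positivity) (by positivity),
    Real.mul_rpow (by positivity) (by positivity),
    Real.mul_rpow (by positivity) (by positivity),
    ← Real.rpow_mul h0, ← Real.rpow_mul h1, ← Real.rpow_mul h2, ← Real.rpow_mul h3,
    show -(1/p)*p = -1 by field_simp, show (-1:ℝ)*p = -p by ring,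
    Real.rpow_neg_one, Real.rpow_neg_one, Real.rpow_neg_one]


/-- For `q ∈ [1,∞)`:
`‖s^{-1/q'} ℓ(s)^{-1/q'} ℓℓ(s)^{-1/q'} ℓℓℓ(s)^{-1}‖_{L^{q'}(0,r)} ≈ ℓℓℓ(r)^{-1/q}` near `0`. -/
theorem stmt14 (q q' : ℝ≥0∞) (hq : 1 ≤ q) (hq' : q ≠ ⊤) (hconj : 1 / q + 1 / q' = 1) :
    ∃ c C r₀ : ℝ, 0 < c ∧ 0 < C ∧ 0 < r₀ ∧
      ∀ r ∈ Set.Ioo (0 : ℝ) r₀,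
        ENNReal.ofReal (c * ellellell r ^ (-(1 / q).toReal)) ≤
            eLpNorm (fun s : ℝ =>
                s ^ (-(1 / q').toReal) * ell s ^ (-(1 / q').toReal) *
                  ellell s ^ (-(1 / q').toReal) * ellellell s ^ (-1 : ℝ))
              q' (volume.restrict (Set.Ioo (0 : ℝ) r)) ∧
          eLpNorm (fun s : ℝ =>
                s ^ (-(1 / q').toReal) * ell s ^ (-(1 / q').toReal) *
                  ellell s ^ (-(1 / q').toReal) * ellellell s ^ (-1 : ℝ))
              q' (volume.restrict (Set.Ioo (0 : ℝ) r)) ≤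
            ENNReal.ofReal (C * ellellell r ^ (-(1 / q).toReal)) := by
  rcases eq_or_lt_of_le hq with hq1 | hq1
  · subst hq1
    have h0 : 1 / q' = 0 := by
      have h1 : (1:ℝ≥0∞) + 1/q' = 1 + 0 := by
        rw [add_zero]; simpa using hconj
      exact (ENNReal.add_right_inj ENNReal.one_ne_top).mp h1
    have hq'top : q' = ⊤ := by
      rw [one_div, ENNReal.inv_eq_zero] at h0; exact h0
    subst hq'top
    refine ⟨1/2, 1, 1, by norm_num, one_pos, one_pos, ?_⟩
    intro r hr
    obtain ⟨hr0, hr1⟩ := hr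
    simp only [one_div, ENNReal.inv_top, ENNReal.toReal_zero, neg_zero, Real.rpow_zero,
      one_mul, eLpNorm_exponent_top, inv_one, ENNReal.toReal_one]
    constructor
    · -- lower bound
      by_contra hcon
      push_neg at hcon
      have hae := ae_le_eLpNormEssSup
        (f := fun s : ℝ => ellellell s ^ (-1 : ℝ)) (μ := volume.restrict (Set.Ioo (0:ℝ) r))
      have hae2 : ∀ᵐ x ∂(volume.restrict (Set.Ioo (0:ℝ) r)),
          (‖ellellell x ^ (-1:ℝ)‖₊ : ℝ≥0∞) < ENNReal.ofReal (2⁻¹ * ellellell r ^ (-1:ℝ)) :=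
        hae.mono fun x hx => lt_of_le_of_lt hx hcon
      rw [ae_restrict_iff' measurableSet_Ioo] at hae2
      have hnull : volume ({x : ℝ | ¬ (x ∈ Set.Ioo (0:ℝ) r → (‖ellellell x ^ (-1:ℝ)‖₊ : ℝ≥0∞)
          < ENNReal.ofReal (2⁻¹ * ellellell r ^ (-1:ℝ)))}) = 0 := hae2
      have hsub : Set.Ioo (r^2) r ⊆ {x : ℝ | ¬ (x ∈ Set.Ioo (0:ℝ) r → (‖ellellell x ^ (-1:ℝ)‖₊ : ℝ≥0∞)
          < ENNReal.ofReal (2⁻¹ * ellellell r ^ (-1:ℝ)))} := by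
        intro x hx
        have hx0 : 0 < x := lt_of_lt_of_le (by positivity) hx.1.le
        simp only [Set.mem_setOf_eq, Classical.not_imp, not_lt]
        refine ⟨⟨hx0, hx.2⟩, ?_⟩
        rw [← enorm_eq_nnnorm, Real.enorm_eq_ofReal (Real.rpow_nonneg (ellellell_pos x).le _)]
        apply ENNReal.ofReal_le_ofReal
        rw [Real.rpow_neg_one, Real.rpow_neg_one]
        have h2 : ellellell x ≤ 2 * ellellell r := by
          calc ellellell x ≤ ellellell (r^2) :=
                ellellell_anti (by positivity) hx.1.le (le_trans hx.2.le hr1.le)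
            _ ≤ 2 * ellellell r := ellellell_sq hr0 hr1
        rw [show (2:ℝ)⁻¹ * (ellellell r)⁻¹ = (2 * ellellell r)⁻¹ by
          rw [mul_inv]]
        exact inv_anti₀ (ellellell_pos x) h2
      have hpos : 0 < volume (Set.Ioo (r^2) r) := by
        rw [Real.volume_Ioo]
        apply ENNReal.ofReal_pos.mpr
        nlinarith
      exact absurd (measure_mono_null hsub hnull) (ne_of_gt hpos)
    · -- upper bound
      apply eLpNormEssSup_le_of_ae_bound (C := ellellell r ^ (-1:ℝ))
      rw [ae_restrict_iff' measurableSet_Ioo]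
      apply Filter.Eventually.of_forall
      intro x hx
      rw [Real.norm_eq_abs, abs_of_nonneg (Real.rpow_nonneg (ellellell_pos x).le _),
        Real.rpow_neg_one, Real.rpow_neg_one]
      exact inv_anti₀ (ellellell_pos r)
        (ellellell_anti hx.1 hx.2.le hr1.le)
  · have hinvq_lt : 1/q < 1 := by rw [one_div]; exact ENNReal.inv_lt_one.mpr hq1
    have hinvq_pos : 0 < 1/q := by rw [one_div, ENNReal.inv_pos]; exact hq'
    have hq'inv : 1/q' = 1 - 1/q :=
      ENNReal.eq_sub_of_add_eq (ne_top_of_lt hinvq_lt) (by rw [add_comm] at hconj; exact hconj)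
    have hq'inv_lt : 1/q' < 1 := by
      rw [hq'inv]; exact ENNReal.sub_lt_self ENNReal.one_ne_top one_ne_zero (ne_of_gt hinvq_pos)
    have hq'inv_ne0 : 1/q' ≠ 0 := by
      rw [hq'inv]; intro h
      exact absurd (tsub_eq_zero_iff_le.mp h) (not_le.mpr hinvq_lt)
    have hq'top : q' ≠ ⊤ := by
      intro h; apply hq'inv_ne0; rw [h]; simp
    have hq'0 : q' ≠ 0 := by
      intro h; rw [h] at hq'inv_lt; simp at hq'inv_lt
    have hq'1 : 1 < q' := by
      rw [one_div] at hq'inv_lt; exact ENNReal.inv_lt_one.mp hq'inv_lt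
    set p := q'.toReal with hpdef
    have hp : 1 < p := by
      have := (ENNReal.toReal_lt_toReal ENNReal.one_ne_top hq'top).mpr hq'1
      rwa [ENNReal.toReal_one] at this
    have hpinv : (1/q').toReal = 1/p := by
      rw [one_div, ENNReal.toReal_inv, one_div]
    have hqinv_toReal : (1/q).toReal = 1 - 1/p := by
      have h2 : 1/q = 1 - 1/q' := ENNReal.eq_sub_of_add_eq (ne_top_of_lt hq'inv_lt) hconj
      rw [h2, ENNReal.toReal_sub_of_le hq'inv_lt.le ENNReal.one_ne_top, ENNReal.toReal_one, hpinv]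
    refine ⟨(p-1)^(-(1/p)), (p-1)^(-(1/p)), 1, ?_, ?_, one_pos, ?_⟩
    · have : (0:ℝ) < p - 1 := by linarith
      positivity
    · have : (0:ℝ) < p - 1 := by linarith
      positivity
    intro r hr
    obtain ⟨hr0, hr1⟩ := hr
    have hmain : eLpNorm (fun s : ℝ =>
          s ^ (-(1 / q').toReal) * ell s ^ (-(1 / q').toReal) *
            ellell s ^ (-(1 / q').toReal) * ellellell s ^ (-1 : ℝ))
        q' (volume.restrict (Set.Ioo (0 : ℝ) r))
        = ENNReal.ofReal ((p-1)^(-(1/p)) * ellellell r ^ (-(1/q).toReal)) := by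
      rw [eLpNorm_eq_lintegral_rpow_enorm_toReal hq'0 hq'top]
      simp only [hpinv, ← hpdef, enorm_eq_nnnorm]
      have hcong : ∫⁻ x in Set.Ioo (0:ℝ) r, (‖x ^ (-(1/p)) * ell x ^ (-(1/p)) *
            ellell x ^ (-(1/p)) * ellellell x ^ (-1:ℝ)‖₊ : ℝ≥0∞) ^ p
          = ∫⁻ x in Set.Ioo (0:ℝ) r, ENNReal.ofReal (gg p x) :=
        setLIntegral_congr_fun measurableSet_Ioo
          (fun x hx => fpow_eq hp hx.1)
      rw [hcong, lintegral_gg hp hr0 hr1]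
      have hApos : (0:ℝ) < ellellell r := ellellell_pos r
      have hppos : (0:ℝ) < p - 1 := by linarith
      have hpos : (0:ℝ) < ellellell r ^ (1-p) / (p-1) := by positivity
      rw [ENNReal.ofReal_rpow_of_pos hpos]
      congr 1
      rw [Real.div_rpow (Real.rpow_nonneg hApos.le _) hppos.le, hqinv_toReal,
        ← Real.rpow_mul hApos.le,
        show (1-p)*(1/p) = -(1-1/p) by field_simp; ring,
        Real.rpow_neg hppos.le, div_eq_mul_inv, mul_comm]
    rw [hmain]
    exact ⟨le_refl _, le_refl _⟩
end

section
/- Let φ : (0,∞) → (0,∞) be an admissible function with inf φ = 0 and let Ω ⊆ ℝⁿ be a bounded domain. Then the Morrey type space M^{φ}(Ω) contains only the zero function (as an a.e. equivalence class). -/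
open MeasureTheory Set
open scoped ENNReal

/-- If `φ` is an admissible function with `inf φ = 0`, then the Morrey type space
`M^φ(Ω)` contains only the zero function: any `u` with finite Morrey norm
vanishes almost everywhere in `Ω`. -/
theorem stmt19 (n : ℕ) (hn : 0 < n) (Ω : Set (EuclideanSpace ℝ (Fin n)))
    (hopen : IsOpen Ω) (hbd : Bornology.IsBounded Ω) (hne : Ω.Nonempty)
    (φ : ℝ → ℝ) (hφpos : ∀ r > 0, 0 < φ r)
    -- φ is admissible
    (hadm : ∀ a > (0 : ℝ), ∃ ε > (0 : ℝ), ∀ r, a ≤ r → ε ≤ φ r)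
    -- inf φ = 0
    (hinf : ∀ ε > (0 : ℝ), ∃ r > (0 : ℝ), φ r < ε)
    (u : EuclideanSpace ℝ (Fin n) → ℝ)
    (hmeas : AEStronglyMeasurable u volume)
    (hint : ∀ (x₀ : EuclideanSpace ℝ (Fin n)) (ρ : ℝ), 0 < ρ → Metric.ball x₀ ρ ⊆ Ω →
      IntegrableOn u (Metric.ball x₀ ρ))
    -- u has finite Morrey norm, bounded by K
    (K : ℝ)
    (hK : ∀ (x₀ : EuclideanSpace ℝ (Fin n)) (ρ : ℝ), 0 < ρ → Metric.ball x₀ ρ ⊆ Ω →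
      (φ (((volume (Metric.ball x₀ ρ)).toReal) ^ ((n : ℝ)⁻¹)))⁻¹ *
        ⨍ x in Metric.ball x₀ ρ, |u x| ≤ K) :
    ∀ᵐ x ∂(volume.restrict Ω), u x = 0 := by
  have hntriv : Nontrivial (EuclideanSpace ℝ (Fin n)) := by
    refine Module.nontrivial_of_finrank_pos (R := ℝ) ?_
    rw [finrank_euclideanSpace_fin]; exact hn
  -- small radii with small φ
  have hsmall : ∀ a > (0:ℝ), ∀ ε > (0:ℝ), ∃ r, 0 < r ∧ r < a ∧ φ r < ε := by
    intro a ha ε hε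
    obtain ⟨ε₀, hε₀, hε₀le⟩ := hadm a ha
    obtain ⟨r, hr, hrφ⟩ := hinf (min ε ε₀) (lt_min hε hε₀)
    refine ⟨r, hr, ?_, hrφ.trans_le (min_le_left _ _)⟩
    by_contra h
    exact absurd (hε₀le r (le_of_not_gt h)) (not_le.mpr ((hrφ.trans_le (min_le_right _ _))))
  -- volume of balls
  set v : ℝ := (volume (Metric.ball (0:EuclideanSpace ℝ (Fin n)) 1)).toReal with hv
  have hvpos : 0 < v := by
    exact ENNReal.toReal_pos (Metric.measure_ball_pos volume 0 one_pos).ne' measure_ball_lt_top.ne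
  set c : ℝ := v ^ ((n:ℝ)⁻¹) with hc
  have hcpos : 0 < c := Real.rpow_pos_of_pos hvpos _
  have hnne : (n:ℝ) ≠ 0 := Nat.cast_ne_zero.mpr hn.ne'
  have hball : ∀ (x : EuclideanSpace ℝ (Fin n)) (t : ℝ), 0 < t →
      ((volume (Metric.ball x t)).toReal) ^ ((n : ℝ)⁻¹) = t * c := by
    intro x t ht
    have h1 : volume (Metric.ball x t) = ENNReal.ofReal (t ^ Module.finrank ℝ (EuclideanSpace ℝ (Fin n))) *
        volume (Metric.ball (0:EuclideanSpace ℝ (Fin n)) 1) := Measure.addHaar_ball volume x ht.le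
    have h2 : (volume (Metric.ball x t)).toReal = t ^ n * v := by
      rw [h1, ENNReal.toReal_mul, ENNReal.toReal_ofReal (by positivity), ← hv,
        finrank_euclideanSpace_fin]
    rw [h2, Real.mul_rpow (by positivity) hvpos.le, ← hc]
    congr 1
    rw [← Real.rpow_natCast t n, ← Real.rpow_mul ht.le, mul_inv_cancel₀ hnne, Real.rpow_one]
  -- the sequence of radii
  have hseq : ∀ k : ℕ, ∃ r : ℝ, 0 < r ∧ r < 1/(k+1) ∧ φ r < 1/(k+1) := fun k =>
    hsmall _ (by positivity) _ (by positivity)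
  choose r hrpos hrlt hrφ using hseq
  set δ : ℕ → ℝ := fun k => r k / c with hδ
  have hδpos : ∀ k, 0 < δ k := fun k => div_pos (hrpos k) hcpos
  have hrtendsto : Filter.Tendsto r Filter.atTop (nhds 0) := by
    refine tendsto_of_tendsto_of_tendsto_of_le_of_le tendsto_const_nhds
      tendsto_one_div_add_atTop_nhds_zero_nat (fun k => (hrpos k).le) (fun k => (hrlt k).le)
  have hδtendsto : Filter.Tendsto δ Filter.atTop (nhds 0) := by
    have := hrtendsto.div_const c
    simpa using this
  have hδtendsto' : Filter.Tendsto δ Filter.atTop (nhdsWithin 0 (Set.Ioi 0)) := by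
    refine tendsto_nhdsWithin_of_tendsto_nhds_of_eventually_within _ hδtendsto ?_
    exact Filter.Eventually.of_forall fun k => hδpos k
  have hcδ : ∀ k, δ k * c = r k := fun k => div_mul_cancel₀ _ hcpos.ne'
  -- bound tends to 0
  have hbound0 : Filter.Tendsto (fun k => K * φ (r k)) Filter.atTop (nhds 0) := by
    have h1 : Filter.Tendsto (fun k => φ (r k)) Filter.atTop (nhds 0) :=
      tendsto_of_tendsto_of_tendsto_of_le_of_le tendsto_const_nhds
        tendsto_one_div_add_atTop_nhds_zero_nat (fun k => (hφpos _ (hrpos k)).le)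
        (fun k => (hrφ k).le)
    simpa using h1.const_mul K
  -- key lemma: u = 0 a.e. on every ball contained in Ω
  have key : ∀ (x₀ : EuclideanSpace ℝ (Fin n)) (ρ : ℝ), 0 < ρ → Metric.ball x₀ ρ ⊆ Ω →
      ∀ᵐ x ∂(volume.restrict (Metric.ball x₀ ρ)), u x = 0 := by
    intro x₀ ρ hρ hsub
    set B := Metric.ball x₀ ρ with hB
    have hui : IntegrableOn u B volume := hint x₀ ρ hρ hsub
    set f : EuclideanSpace ℝ (Fin n) → ℝ := B.indicator u with hf
    have hfi : Integrable f volume := hui.integrable_indicator measurableSet_ball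
    have hgi : LocallyIntegrable (fun y => |f y|) volume := hfi.abs.locallyIntegrable
    have := IsUnifLocDoublingMeasure.ae_tendsto_average (μ := volume) hgi 1
    filter_upwards [ae_restrict_mem measurableSet_ball, ae_restrict_of_ae this]
      with x hxB hx
    have hlim : Filter.Tendsto (fun k => ⨍ y in Metric.closedBall x (δ k), |f y|)
        Filter.atTop (nhds (|f x|)) := by
      refine hx (fun _ => x) δ hδtendsto' ?_
      exact Filter.Eventually.of_forall fun k => by
        simp only [Metric.mem_closedBall, dist_self]
        have := (hδpos k).le
        linarith
    -- eventually the average is bounded by K * φ (r k)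
    have hev : ∀ᶠ k in Filter.atTop, (⨍ y in Metric.closedBall x (δ k), |f y|) ≤ K * φ (r k) := by
      have hpos : 0 < ρ - dist x x₀ := by
        simpa [sub_pos, hB] using hxB
      have hevδ : ∀ᶠ k in Filter.atTop, δ k < ρ - dist x x₀ :=
        hδtendsto.eventually_lt_const hpos
      filter_upwards [hevδ] with k hk
      have hsubB : Metric.closedBall x (δ k) ⊆ B := by
        intro y hy
        have : dist y x₀ ≤ dist y x + dist x x₀ := dist_triangle _ _ _
        have : dist y x₀ ≤ δ k + dist x x₀ :=
          this.trans (add_le_add_left (Metric.mem_closedBall.mp hy) _)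
        exact Metric.mem_ball.mpr (lt_of_le_of_lt this (by linarith))
      -- average of |f| over closed ball = average of |u| over open ball
      have h1 : (⨍ y in Metric.closedBall x (δ k), |f y|)
          = ⨍ y in Metric.closedBall x (δ k), |u y| := by
        refine setAverage_congr_fun measurableSet_closedBall ?_
        exact Filter.Eventually.of_forall fun y hy => by
          rw [hf, Set.indicator_of_mem (hsubB hy)]
      have haeeq : Metric.closedBall x (δ k) =ᵐ[volume] Metric.ball x (δ k) := by
        rw [MeasureTheory.ae_eq_set]
        constructor
        · refine measure_mono_null (fun y hy => ?_) (Measure.addHaar_sphere volume x (δ k))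
          rcases hy with ⟨h1', h2'⟩
          simp only [Metric.mem_closedBall, Metric.mem_ball, not_lt] at h1' h2'
          exact Metric.mem_sphere.mpr (le_antisymm h1' h2')
        · simp [Set.diff_eq_empty.mpr Metric.ball_subset_closedBall]
      have h2 : (⨍ y in Metric.closedBall x (δ k), |u y|)
          = ⨍ y in Metric.ball x (δ k), |u y| := setAverage_congr haeeq
      rw [h1, h2]
      have hKk := hK x (δ k) (hδpos k) ((Metric.ball_subset_closedBall.trans hsubB).trans hsub)
      rw [hball x (δ k) (hδpos k), hcδ k] at hKk
      have hφr : 0 < φ (r k) := hφpos _ (hrpos k)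
      calc (⨍ y in Metric.ball x (δ k), |u y|)
          = φ (r k) * ((φ (r k))⁻¹ * ⨍ y in Metric.ball x (δ k), |u y|) := by
            field_simp
        _ ≤ φ (r k) * K := by
            exact mul_le_mul_of_nonneg_left hKk hφr.le
        _ = K * φ (r k) := mul_comm _ _
    have hle : |f x| ≤ 0 := le_of_tendsto_of_tendsto hlim hbound0 hev
    have : f x = u x := by rw [hf, Set.indicator_of_mem hxB]
    have : |u x| = 0 := le_antisymm (this ▸ hle) (abs_nonneg _)
    exact abs_eq_zero.mp this
  -- patch up with a countable cover of Ω by balls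
  have hcov : ∀ x ∈ Ω, ∃ ρ > (0:ℝ), Metric.ball x ρ ⊆ Ω := fun x hx =>
    Metric.isOpen_iff.mp hopen x hx
  choose! ρf hρfpos hρfsub using hcov
  obtain ⟨t, hts, htc, htU⟩ := TopologicalSpace.countable_cover_nhdsWithin
    (f := fun x => Metric.ball x (ρf x)) (s := Ω)
    (fun x hx => nhdsWithin_le_nhds (Metric.ball_mem_nhds x (hρfpos x hx)))
  have hae : ∀ᵐ x ∂(volume.restrict (⋃ x ∈ t, Metric.ball x (ρf x))), u x = 0 := by
    rw [ae_restrict_biUnion_iff _ htc]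
    exact fun x hx => key x (ρf x) (hρfpos x (hts hx)) (hρfsub x (hts hx))
  exact hae.filter_mono (ae_mono (Measure.restrict_mono htU le_rfl))
end
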